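/- Beutelspacher's theorem: For positive integers k, n with n ≡ 1 (mod k) and 1 ≤ k ≤ n, the maximum size of a partial k-spread of F_q^n equals (q^n − q^{k+1} + q^k − 1)/(q^k − 1). -/

import Mathlib

open Module

/-- The subspace distance between two subspaces. -/
noncomputable def dS {K V : Type*} [Field K] [AddCommGroup V] [Module K V]
    (U W : Submodule K V) : ℕ :=
  finrank K ↥(U ⊔ W) - finrank K ↥(U ⊓ W)

/-- The injection distance between two subspaces. -/
noncomputable def dI {K V : Type*} [Field K] [AddCommGroup V] [Module K V]
    (U W : Submodule K V) : ℕ :=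
  max (finrank K ↥U) (finrank K ↥W) - finrank K ↥(U ⊓ W)

/-- `Acdc K V d k` is the maximum cardinality of a set of `k`-dimensional subspaces of `V`
with pairwise subspace distance at least `d` (a constant dimension code). -/
noncomputable def Acdc (K V : Type*) [Field K] [AddCommGroup V] [Module K V]
    (d k : ℕ) : ℕ :=
  sSup { m | ∃ C : Finset (Submodule K V),
    (∀ U ∈ C, finrank K ↥U = k) ∧
    (∀ U ∈ C, ∀ W ∈ C, U ≠ W → d ≤ dS U W) ∧ C.card = m }

set_option linter.unusedSectionVars false
set_option linter.unusedVariables false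
set_option maxHeartbeats 1000000

open Polynomial Finset

noncomputable section


variable (K : Type*) [Field K] [Fintype K] (m : ℕ)

/-- A field extension of `K` of degree `m`. -/
def FqmExt : Type _ :=
  SplittingField (X ^ (Fintype.card K ^ m) - X : K[X])

instance : Field (FqmExt K m) := inferInstanceAs (Field (SplittingField _))
instance : Algebra K (FqmExt K m) := inferInstanceAs (Algebra K (SplittingField _))
instance : FiniteDimensional K (FqmExt K m) :=
  inferInstanceAs (FiniteDimensional K (SplittingField (X ^ (Fintype.card K ^ m) - X : K[X])))
instance : Finite (FqmExt K m) := Module.finite_of_finite K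

theorem FqmExt.finrank (hm : m ≠ 0) : finrank K (FqmExt K m) = m := by
  classical
  haveI : Fintype (FqmExt K m) := Fintype.ofFinite _
  set q := Fintype.card K with hq
  set L := FqmExt K m
  set g : K[X] := X ^ q ^ m - X with hg
  have hq1 : 1 < q := Fintype.one_lt_card
  -- characteristic
  obtain ⟨p, hchar⟩ := CharP.exists K
  haveI : CharP K p := hchar
  obtain ⟨t, hp, hcard⟩ := FiniteField.card K p
  haveI : Fact p.Prime := ⟨hp⟩
  have hpq : p ∣ q ^ m := by
    refine dvd_pow ?_ hm
    rw [hq, hcard]; exact dvd_pow_self p t.ne_zero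
  have hsep : g.Separable := galois_poly_separable p (q ^ m) hpq
  have hsplits : Splits (g.map (algebraMap K L)) := SplittingField.splits g
  have hnd : g.natDegree = q ^ m :=
    FiniteField.X_pow_card_pow_sub_X_natDegree_eq K hm hq1
  have hgne : g ≠ 0 := FiniteField.X_pow_card_pow_sub_X_ne_zero K hm hq1
  have key : Fintype.card (g.rootSet L) = q ^ m := by
    rw [card_rootSet_eq_natDegree hsep hsplits, hnd]
  -- the root set is everything
  have huniv : g.rootSet L = Set.univ := by
    rw [Set.eq_univ_iff_forall]
    intro x
    have hx : x ∈ Algebra.adjoin K (g.rootSet L) := by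
      rw [show Algebra.adjoin K (g.rootSet L) = ⊤ from SplittingField.adjoin_rootSet g]; trivial
    rw [Algebra.mem_adjoin_iff] at hx
    -- subring of elements fixed by x ↦ x ^ q ^ m
    have hqm : q ^ m = p ^ (t * m) := by rw [hq, hcard, pow_mul]
    haveI : CharP L p := (Algebra.charP_iff K L p).mp inferInstance
    have hsub : Subring.closure (Set.range (algebraMap K L) ∪ g.rootSet L) ≤
        RingHom.eqLocus (iterateFrobenius L p (t * m)) (RingHom.id L) := by
      rw [Subring.closure_le]
      rintro y (⟨r, rfl⟩ | hy)
      · show iterateFrobenius L p (t * m) _ = _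
        rw [iterateFrobenius_def, ← map_pow, ← hqm, FiniteField.pow_card_pow, RingHom.id_apply]
      · show iterateFrobenius L p (t * m) _ = _
        rw [iterateFrobenius_def, ← hqm, RingHom.id_apply]
        have := (mem_rootSet_of_ne hgne).mp hy
        rw [hg] at this
        simp only [map_sub, map_pow, aeval_X, sub_eq_zero] at this
        exact this
    have := hsub hx
    rw [mem_rootSet_of_ne hgne, hg]
    simp only [map_sub, map_pow, aeval_X, sub_eq_zero]
    have : iterateFrobenius L p (t * m) x = x := this
    rwa [iterateFrobenius_def, ← hqm] at this
  have hcardL : Fintype.card L = q ^ m := by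
    rw [← key]
    exact (Fintype.card_congr ((Equiv.setCongr huniv).trans (Equiv.Set.univ L))).symm
  have := card_eq_pow_finrank (K := K) (V := L)
  rw [hcardL, ← hq] at this
  exact (Nat.pow_right_injective hq1 this.symm)


end

namespace Beut

open scoped Classical


def Nps (q k : ℕ) : ℕ → ℕ
  | 0 => 0
  | s+1 => if s = 0 then 1 else Nps q k s + q^(s*k+1)

theorem Nps_formula (q k : ℕ) (s : ℕ) (hs : 1 ≤ s) :
    (Nps q k s : ℤ) * ((q:ℤ)^k - 1)
      = (q:ℤ)^(s*k+1) - (q:ℤ)^(k+1) + (q:ℤ)^k - 1 := by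
  induction s, hs using Nat.le_induction with
  | base =>
    have h1 : Nps q k 1 = 1 := by simp [Nps]
    rw [h1, show 1*k+1 = k+1 by ring]
    push_cast
    ring
  | succ s hs ih =>
    have hs0 : s ≠ 0 := by omega
    have hNps : Nps q k (s+1) = Nps q k s + q^(s*k+1) := by
      simp only [Nps, if_neg hs0]
    rw [hNps]
    have e : (q:ℤ)^((s+1)*k+1) = (q:ℤ)^(s*k+1) * (q:ℤ)^k := by
      rw [← pow_add]; congr 1; ring
    push_cast
    rw [e]
    linear_combination ih


section Counting

variable {K V : Type*} [Field K] [Fintype K] [AddCommGroup V] [Module K V]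
  [FiniteDimensional K V] [Fintype V]



theorem card_filter_mem (U : Submodule K V) :
    (univ.filter (fun v : V => v ∈ U)).card = Fintype.card K ^ finrank K U := by
  rw [← Fintype.card_subtype]
  exact card_eq_pow_finrank (K := K) (V := U)

theorem card_filter_mem_ne (U : Submodule K V) :
    (univ.filter (fun v : V => v ∈ U ∧ v ≠ 0)).card = Fintype.card K ^ finrank K U - 1 := by
  have h0 : (0 : V) ∈ univ.filter (fun v : V => v ∈ U) := by simp [U.zero_mem]
  have h : univ.filter (fun v : V => v ∈ U ∧ v ≠ 0)
      = (univ.filter (fun v : V => v ∈ U)).erase 0 := by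
    ext v
    simp only [mem_filter, mem_erase, mem_univ, true_and]
    tauto
  rw [h, card_erase_of_mem h0, card_filter_mem]

theorem partition_count (D : Finset (Submodule K V))
    (hd : ∀ U ∈ D, ∀ U' ∈ D, U ≠ U' → U ⊓ U' = ⊥) (W : Submodule K V) :
    (univ.filter (fun v : V => v ∈ W ∧ v ≠ 0 ∧ ∀ U ∈ D, v ∉ U)).card
      + ∑ U ∈ D, (Fintype.card K ^ finrank K ↥(U ⊓ W) - 1)
      = Fintype.card K ^ finrank K W - 1 := by
  have hbi : ∑ U ∈ D, (Fintype.card K ^ finrank K ↥(U ⊓ W) - 1)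
      = (D.biUnion (fun U => univ.filter (fun v : V => v ∈ U ⊓ W ∧ v ≠ 0))).card := by
    rw [card_biUnion]
    · exact Finset.sum_congr rfl fun U _ => (card_filter_mem_ne _).symm
    · intro U hU U' hU' hne
      rw [Function.onFun, Finset.disjoint_left]
      rintro v hv hv'
      simp only [mem_filter, Submodule.mem_inf, mem_univ, true_and] at hv hv'
      obtain ⟨⟨hvU, -⟩, h0⟩ := hv
      obtain ⟨⟨hvU', -⟩, -⟩ := hv'
      have : v ∈ U ⊓ U' := Submodule.mem_inf.2 ⟨hvU, hvU'⟩
      rw [hd U hU U' hU' hne] at this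
      exact h0 this
  rw [hbi, ← card_filter_mem_ne W]
  rw [← Finset.card_union_of_disjoint]
  · congr 1
    ext v
    simp only [mem_union, mem_filter, mem_univ, true_and, mem_biUnion, Submodule.mem_inf]
    constructor
    · rintro (⟨hw, h0, hall⟩ | ⟨U, hU, ⟨hvU, hvW⟩, h0⟩)
      · exact ⟨hw, h0⟩
      · exact ⟨hvW, h0⟩
    · rintro ⟨hw, h0⟩
      by_cases hc : ∀ U ∈ D, v ∉ U
      · exact Or.inl ⟨hw, h0, hc⟩
      · push_neg at hc
        obtain ⟨U, hU, hvU⟩ := hc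
        exact Or.inr ⟨U, hU, ⟨hvU, hw⟩, h0⟩
  · rw [Finset.disjoint_left]
    rintro v hv hv'
    simp only [mem_filter, mem_biUnion, Submodule.mem_inf, mem_univ, true_and] at hv hv'
    obtain ⟨U, hU, ⟨hvU, -⟩, -⟩ := hv'
    obtain ⟨-, -, hall⟩ := hv
    exact hall U hU hvU



theorem finrank_ker_add_one (φ : Module.Dual K V) (hφ : φ ≠ 0) :
    finrank K (LinearMap.ker φ) + 1 = finrank K V := by
  have hsurj : Function.Surjective φ := by
    obtain ⟨v, hv⟩ : ∃ v, φ v ≠ 0 := by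
      by_contra h; push_neg at h
      exact hφ (LinearMap.ext fun v => h v)
    intro a
    exact ⟨(a * (φ v)⁻¹) • v, by simp [mul_assoc, inv_mul_cancel₀ hv]⟩
  have := LinearMap.finrank_range_add_finrank_ker φ
  rw [LinearMap.range_eq_top.2 hsurj, finrank_top, Module.finrank_self] at this
  omega

theorem finrank_inf_ker (U : Submodule K V) (φ : Module.Dual K V) (hφ : φ ≠ 0)
    (hU : ¬ U ≤ LinearMap.ker φ) :
    finrank K ↥(U ⊓ LinearMap.ker φ) + 1 = finrank K U := by
  have hker := finrank_ker_add_one φ hφ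
  have hsum := Submodule.finrank_sup_add_finrank_inf_eq U (LinearMap.ker φ)
  have hlt : LinearMap.ker φ < U ⊔ LinearMap.ker φ := by
    rcases lt_or_eq_of_le (le_sup_right : LinearMap.ker φ ≤ U ⊔ LinearMap.ker φ) with h | h
    · exact h
    · exact absurd (sup_eq_right.1 h.symm) hU
  have h1 : finrank K ↥(LinearMap.ker φ) < finrank K ↥(U ⊔ LinearMap.ker φ) :=
    Submodule.finrank_lt_finrank_of_lt hlt
  have h2 : finrank K ↥(U ⊔ LinearMap.ker φ) ≤ finrank K V :=
    Submodule.finrank_le _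
  omega

variable [Fintype V]

theorem card_dual_vanish (v : V) (hv : v ≠ 0) [Fintype (Module.Dual K V)] :
    (univ.filter (fun φ : Module.Dual K V => φ ≠ 0 ∧ φ v = 0)).card
      = Fintype.card K ^ (finrank K V - 1) - 1 := by
  have hev : (LinearMap.applyₗ v : Module.Dual K V →ₗ[K] K) ≠ 0 := by
    intro h
    apply hv
    rw [← Module.forall_dual_apply_eq_zero_iff K v]
    intro φ
    have := congrArg (fun f => f φ) h
    simpa using this
  have hker := finrank_ker_add_one (V := Module.Dual K V) (LinearMap.applyₗ v) hev
  rw [Subspace.dual_finrank_eq] at hker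
  set e : Module.Dual K V →ₗ[K] K := LinearMap.applyₗ v with he
  have hev' : e ≠ 0 := hev
  have hker2 := finrank_ker_add_one (V := Module.Dual K V) e hev'
  rw [Subspace.dual_finrank_eq] at hker2
  have := card_filter_mem_ne (V := Module.Dual K V) (LinearMap.ker e)
  have hrk : finrank K ↥(LinearMap.ker e) = finrank K V - 1 := by omega
  rw [hrk] at this
  rw [← this]
  congr 1
  ext φ
  have heφ : e φ = φ v := rfl
  simp only [mem_filter, mem_univ, true_and, LinearMap.mem_ker, heφ]
  tauto


end Counting



theorem key_dvd (q k s F : ℕ) (hq : 2 ≤ q) (hk : 2 ≤ k) (hs : 1 ≤ s)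
    (hF : (F:ℤ) * ((q:ℤ)^k - 1) = (q:ℤ)^(s*k+1) - (q:ℤ)^(k+1) + (q:ℤ)^k - 1) :
    ((q:ℤ)^(k-1) * ((q:ℤ) - 1)) ∣
      ((q:ℤ)^(s*k) - 1 - ((F:ℤ)+1)*((q:ℤ)^(k-1)-1) - ((q:ℤ)^k - 2*(q:ℤ)^(k-1)+1)) := by
  refine ⟨(F:ℤ) - (q:ℤ)^(s*k-k+1) + (q:ℤ) - 1, ?_⟩
  have hq1 : (1:ℤ) < (q:ℤ) := by exact_mod_cast hq
  have hqk : ((q:ℤ)^k - 1) ≠ 0 := by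
    have : (1:ℤ) < (q:ℤ)^k := one_lt_pow₀ hq1 (by omega)
    omega
  apply mul_left_cancel₀ hqk
  have e1 : (q:ℤ)^k = (q:ℤ)^(k-1) * q := by rw [← pow_succ]; congr 1; omega
  have e2 : (q:ℤ)^(k+1) = (q:ℤ)^(k-1) * q^2 := by rw [sq, ← mul_assoc, ← pow_succ, ← pow_succ]; congr 1; omega
  have e3 : (q:ℤ)^(s*k) = (q:ℤ)^(s*k-k+1) * (q:ℤ)^(k-1) := by rw [← pow_add]; congr 1; have := Nat.le_mul_of_pos_left k (show 0 < s by omega); omega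
  have e4 : (q:ℤ)^(s*k+1) = (q:ℤ)^(s*k-k+1) * (q:ℤ)^(k-1) * q := by
    rw [mul_assoc, ← pow_succ, ← pow_add]; congr 1; have := Nat.le_mul_of_pos_left k (show 0 < s by omega); omega
  rw [e1, e2, e4] at hF
  rw [e1, e3]
  linear_combination (-((q:ℤ)^(k-1) * q - 1)) * hF

theorem ge_of_dvd_sub (a b m : ℤ) (ha : 0 ≤ a) (hb : 0 ≤ b) (hbm : b < m)
    (h : m ∣ (a - b)) : b ≤ a := by
  obtain ⟨j, hj⟩ := h
  rcases le_or_gt 0 j with hj0 | hj0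
  · nlinarith
  · have : j ≤ -1 := by omega
    nlinarith

theorem final_contra (q k s : ℕ) (hq : 2 ≤ q) (hk : 2 ≤ k) (hs : 1 ≤ s)
    (h : ((q:ℤ)^(s*k+1) - 1) * ((q:ℤ)^k - 2*(q:ℤ)^(k-1)+1)
        ≤ ((q:ℤ)^(k+1) - 2*(q:ℤ)^k + 1) * ((q:ℤ)^(s*k) - 1)) : False := by
  have hq1 : (1:ℤ) < (q:ℤ) := by exact_mod_cast hq
  have e1 : (q:ℤ)^k = (q:ℤ)^(k-1) * q := by rw [← pow_succ]; congr 1; omega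
  have e2 : (q:ℤ)^(k+1) = (q:ℤ)^(k-1) * q^2 := by
    rw [sq, ← mul_assoc, ← pow_succ, ← pow_succ]; congr 1; omega
  have e4 : (q:ℤ)^(s*k+1) = (q:ℤ)^(s*k) * q := by rw [← pow_succ]
  have hA : (1:ℤ) ≤ (q:ℤ)^(k-1) := one_le_pow₀ (by omega)
  have hB : (1:ℤ) ≤ (q:ℤ)^(s*k) := one_le_pow₀ (by omega)
  rw [e1, e2, e4] at h
  nlinarith [mul_pos (show (0:ℤ) < (q:ℤ) - 1 by omega)
      (show (0:ℤ) < (q:ℤ)^(k-1)*((q:ℤ)-2) + 1 + (q:ℤ)^(s*k) - 1 by nlinarith)]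


section Upper

variable {K V : Type*} [Field K] [Fintype K] [AddCommGroup V] [Module K V]
  [FiniteDimensional K V] [Fintype V]

theorem upper_bound (k s F : ℕ) (hk : 2 ≤ k) (hs : 1 ≤ s)
    (hV : finrank K V = s * k + 1)
    (hF : (F:ℤ) * ((Fintype.card K : ℤ)^k - 1)
        = (Fintype.card K : ℤ)^(s*k+1) - (Fintype.card K : ℤ)^(k+1)
          + (Fintype.card K : ℤ)^k - 1)
    (C : Finset (Submodule K V)) (hdim : ∀ U ∈ C, finrank K ↥U = k)
    (hdisj : ∀ U ∈ C, ∀ W ∈ C, U ≠ W → U ⊓ W = ⊥) : C.card ≤ F := by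
  set q := Fintype.card K with hqdef
  have hq : 2 ≤ q := Fintype.one_lt_card
  have hq1 : (1:ℤ) < (q:ℤ) := by exact_mod_cast hq
  by_contra hcon
  push_neg at hcon
  obtain ⟨D, hDC, hDcard⟩ := Finset.exists_subset_card_eq (show F + 1 ≤ C.card by omega)
  have hdimD : ∀ U ∈ D, finrank K ↥U = k := fun U hU => hdim U (hDC hU)
  have hdisjD : ∀ U ∈ D, ∀ W ∈ D, U ≠ W → U ⊓ W = ⊥ :=
    fun U hU W hW => hdisj U (hDC hU) W (hDC hW)
  set holes : Finset V :=
    univ.filter (fun v : V => v ∈ (⊤ : Submodule K V) ∧ v ≠ 0 ∧ ∀ U ∈ D, v ∉ U) with hholes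
  -- global hole count
  have htop := partition_count D hdisjD ⊤
  have hsum_top : ∑ U ∈ D, (q ^ finrank K ↥(U ⊓ (⊤ : Submodule K V)) - 1)
      = (F + 1) * (q ^ k - 1) := by
    rw [Finset.sum_congr rfl (fun U hU => by rw [inf_top_eq, hdimD U hU])]
    rw [Finset.sum_const, hDcard, smul_eq_mul]
  rw [hsum_top, finrank_top, hV] at htop
  have hMz : ((holes.card : ℤ)) = (q:ℤ)^(k+1) - 2*(q:ℤ)^k + 1 := by
    have h1 : (1:ℤ) ≤ (q:ℤ)^(s*k+1) := one_le_pow₀ (by omega)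
    have h2 : (1:ℤ) ≤ (q:ℤ)^k := one_le_pow₀ (by omega)
    have := htop
    have hcast : (holes.card : ℤ) + (F+1)*((q:ℤ)^k - 1) = (q:ℤ)^(s*k+1) - 1 := by
      have := congrArg (fun x : ℕ => (x : ℤ)) htop
      rw [← hqdef, ← hholes] at this
      push_cast [Nat.cast_sub (show 1 ≤ q^(s*k+1) by exact_mod_cast h1),
        Nat.cast_sub (show 1 ≤ q^k by exact_mod_cast h2)] at this
      linarith
    linear_combination hcast - hF
  -- dual space
  haveI : Finite (Module.Dual K V) := Module.finite_of_finite K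
  haveI : Fintype (Module.Dual K V) := Fintype.ofFinite _
  set P : Finset (Module.Dual K V) := univ.filter (fun φ => φ ≠ 0) with hP
  have hPcard : P.card = q ^ (s*k+1) - 1 := by
    rw [hP, Finset.filter_ne', Finset.card_erase_of_mem (mem_univ _), Finset.card_univ]
    congr 1
    rw [card_eq_pow_finrank (K := K) (V := Module.Dual K V), Subspace.dual_finrank_eq, hV]
  -- per-functional lower bound
  have hperφ : ∀ φ ∈ P, ((q:ℤ)^k - 2*(q:ℤ)^(k-1) + 1)
      ≤ ((holes.filter (fun v => φ v = 0)).card : ℤ) := by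
    intro φ hφP
    have hφ : φ ≠ 0 := by
      rw [hP, mem_filter] at hφP; exact hφP.2
    have hkerrank : finrank K ↥(LinearMap.ker φ) = s * k := by
      have := finrank_ker_add_one φ hφ
      omega
    have hker := partition_count D hdisjD (LinearMap.ker φ)
    -- identify the filter set
    have hset : univ.filter
        (fun v : V => v ∈ LinearMap.ker φ ∧ v ≠ 0 ∧ ∀ U ∈ D, v ∉ U)
        = holes.filter (fun v => φ v = 0) := by
      ext v
      simp only [mem_filter, mem_univ, true_and, LinearMap.mem_ker, hholes,
        Submodule.mem_top]
      tauto
    rw [hset, hkerrank] at hker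
    -- split the sum
    set a := (D.filter (fun U => U ≤ LinearMap.ker φ)).card with ha
    have hsplit : ∑ U ∈ D, (q ^ finrank K ↥(U ⊓ LinearMap.ker φ) - 1)
        = a * (q^k - 1) + (F + 1 - a) * (q^(k-1) - 1) := by
      rw [← Finset.sum_filter_add_sum_filter_not D (fun U => U ≤ LinearMap.ker φ)]
      congr 1
      · rw [Finset.sum_congr rfl (fun U hU => ?_), Finset.sum_const, smul_eq_mul]
        rw [mem_filter] at hU
        rw [inf_eq_left.2 hU.2, hdimD U hU.1]
      · have hcongr : ∀ U ∈ D.filter (fun U => ¬ U ≤ LinearMap.ker φ),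
            q ^ finrank K ↥(U ⊓ LinearMap.ker φ) - 1 = q^(k-1) - 1 := by
          intro U hU
          rw [mem_filter] at hU
          have h1 := finrank_inf_ker U φ hφ hU.2
          rw [hdimD U hU.1] at h1
          rw [show finrank K ↥(U ⊓ LinearMap.ker φ) = k - 1 by omega]
        rw [Finset.sum_congr rfl hcongr, Finset.sum_const, smul_eq_mul,
          Finset.filter_not, Finset.card_sdiff_of_subset (Finset.filter_subset _ _), hDcard]
    rw [hsplit] at hker
    have haF : a ≤ F + 1 := by
      rw [ha, ← hDcard]; exact Finset.card_filter_le _ _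
    -- cast to ℤ
    have h1 : (1:ℕ) ≤ q^(s*k) := Nat.one_le_pow _ _ (by omega)
    have h2 : (1:ℕ) ≤ q^k := Nat.one_le_pow _ _ (by omega)
    have h3 : (1:ℕ) ≤ q^(k-1) := Nat.one_le_pow _ _ (by omega)
    have hcast : ((holes.filter (fun v => φ v = 0)).card : ℤ)
        + a * ((q:ℤ)^k - 1) + ((F:ℤ) + 1 - a) * ((q:ℤ)^(k-1) - 1)
        = (q:ℤ)^(s*k) - 1 := by
      have := congrArg (fun x : ℕ => (x : ℤ)) hker
      rw [← hqdef] at this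
      push_cast [Nat.cast_sub h1, Nat.cast_sub h2, Nat.cast_sub h3,
        Nat.cast_sub haF] at this
      linarith
    set MM := ((holes.filter (fun v => φ v = 0)).card : ℤ) with hMM
    have hMeq : MM = (q:ℤ)^(s*k) - 1 - ((F:ℤ)+1)*((q:ℤ)^(k-1) - 1)
        - (a:ℤ) * ((q:ℤ)^(k-1) * ((q:ℤ) - 1)) := by
      have e1 : (q:ℤ)^k = (q:ℤ)^(k-1) * q := by rw [← pow_succ]; congr 1; omega
      rw [e1] at hcast
      linear_combination hcast
    -- divisibility and bound
    have hdvd : ((q:ℤ)^(k-1) * ((q:ℤ) - 1)) ∣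
        (MM - ((q:ℤ)^k - 2*(q:ℤ)^(k-1) + 1)) := by
      have := key_dvd q k s F hq hk hs hF
      have h4 : MM - ((q:ℤ)^k - 2*(q:ℤ)^(k-1) + 1)
          = ((q:ℤ)^(s*k) - 1 - ((F:ℤ)+1)*((q:ℤ)^(k-1)-1) - ((q:ℤ)^k - 2*(q:ℤ)^(k-1)+1))
            - (a:ℤ) * ((q:ℤ)^(k-1) * ((q:ℤ) - 1)) := by
        rw [hMeq]; ring
      rw [h4]
      exact dvd_sub this (dvd_mul_left _ _)
    have hA : (1:ℤ) < (q:ℤ)^(k-1) := one_lt_pow₀ hq1 (by omega)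
    have e1 : (q:ℤ)^k = (q:ℤ)^(k-1) * q := by rw [← pow_succ]; congr 1; omega
    refine ge_of_dvd_sub MM _ _ (by positivity) ?_ ?_ hdvd
    · rw [e1]; nlinarith
    · rw [e1]; nlinarith
  -- double counting
  have hdc : ∑ φ ∈ P, (holes.filter (fun v => φ v = 0)).card
      = ∑ v ∈ holes, (P.filter (fun φ => φ v = 0)).card := by
    simp only [Finset.card_filter]
    exact Finset.sum_comm
  have hinner : ∀ v ∈ holes, (P.filter (fun φ => φ v = 0)).card = q^(s*k) - 1 := by
    intro v hv
    have hv0 : v ≠ 0 := by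
      rw [hholes, mem_filter] at hv; exact hv.2.2.1
    have := card_dual_vanish (K := K) v hv0
    rw [hV] at this
    rw [hP, Finset.filter_filter]
    rw [show s * k + 1 - 1 = s * k by omega] at this
    exact this
  have htotal : ∑ φ ∈ P, (holes.filter (fun v => φ v = 0)).card
      = holes.card * (q^(s*k) - 1) := by
    rw [hdc, Finset.sum_congr rfl hinner, Finset.sum_const, smul_eq_mul]
  -- combine in ℤ
  have h1 : (1:ℕ) ≤ q^(s*k) := Nat.one_le_pow _ _ (by omega)
  have h2 : (1:ℕ) ≤ q^(s*k+1) := Nat.one_le_pow _ _ (by omega)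
  have hptotal : ((q:ℤ)^(s*k+1) - 1) * ((q:ℤ)^k - 2*(q:ℤ)^(k-1) + 1)
      ≤ ((q:ℤ)^(k+1) - 2*(q:ℤ)^k + 1) * ((q:ℤ)^(s*k) - 1) := by
    have hle := Finset.card_nsmul_le_sum P
      (fun φ => ((holes.filter (fun v => φ v = 0)).card : ℤ)) _ hperφ
    rw [nsmul_eq_mul] at hle
    have hcast2 : ∑ φ ∈ P, ((holes.filter (fun v => φ v = 0)).card : ℤ)
        = ((holes.card * (q^(s*k) - 1) : ℕ) : ℤ) := by
      rw [← Nat.cast_sum]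
      exact_mod_cast congrArg (fun x : ℕ => (x:ℤ)) htotal
    have hPz : ((P.card : ℕ) : ℤ) = (q:ℤ)^(s*k+1) - 1 := by
      rw [hPcard]
      push_cast [Nat.cast_sub h2]
      ring
    rw [hcast2, hPz] at hle
    have : ((holes.card * (q^(s*k) - 1) : ℕ) : ℤ)
        = ((q:ℤ)^(k+1) - 2*(q:ℤ)^k + 1) * ((q:ℤ)^(s*k) - 1) := by
      push_cast [Nat.cast_sub h1]
      rw [hMz]
    rw [this] at hle
    exact hle
  exact final_contra q k s hq hk hs hptotal


end Upper

section Construct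

variable {K : Type u} [Field K] [Fintype K]



theorem exists_inj {V W : Type*} [AddCommGroup V] [Module K V] [AddCommGroup W] [Module K W]
    [FiniteDimensional K V] [FiniteDimensional K W] (h : finrank K V ≤ finrank K W) :
    ∃ f : V →ₗ[K] W, Function.Injective f := by
  have bV := finBasis K V
  have bW := finBasis K W
  set w : Fin (finrank K V) → W := fun i => bW (Fin.castLE h i) with hw
  have hli : LinearIndependent K w := bW.linearIndependent.comp _ (Fin.castLE_injective h)
  refine ⟨bV.constr K w, ?_⟩
  rw [← LinearMap.ker_eq_bot, eq_bot_iff]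
  intro x hx
  have hx : (bV.constr K) w x = 0 := hx
  have hfx : ∑ i, bV.repr x i • w i = 0 := by
    have : (bV.constr K w) (∑ i, bV.repr x i • bV i) = ∑ i, bV.repr x i • w i := by
      rw [map_sum]
      exact Finset.sum_congr rfl fun i _ => by rw [map_smul, Basis.constr_basis]
    rw [bV.sum_repr x] at this
    rw [← this, hx]
  have hz := Fintype.linearIndependent_iff.mp hli _ hfx
  have : x = ∑ i, bV.repr x i • bV i := (bV.sum_repr x).symm
  rw [this]
  simp only [hz, zero_smul, Finset.sum_const_zero]
  exact Submodule.zero_mem ⊥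

theorem exists_submodule_finrank {V : Type*} [AddCommGroup V] [Module K V]
    [FiniteDimensional K V] (k : ℕ) (h : k ≤ finrank K V) :
    ∃ U : Submodule K V, finrank K ↥U = k := by
  obtain ⟨f, hf⟩ := exists_inj (V := Fin k → K) (W := V)
    (le_of_eq_of_le (by simp) h)
  exact ⟨LinearMap.range f, by rw [LinearMap.finrank_range_of_inj hf]; simp⟩

/-- The inductive construction step. -/
theorem construction_step {W Z : Type*} [AddCommGroup W] [Module K W] [AddCommGroup Z]
    [Module K Z] [FiniteDimensional K W] [FiniteDimensional K Z] {k m : ℕ}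
    (hk : 1 ≤ k) (hkm : k ≤ m) (hW : finrank K W = m) (hZ : finrank K Z = k)
    (C : Finset (Submodule K W)) (hdim : ∀ U ∈ C, finrank K ↥U = k)
    (hdisj : ∀ U ∈ C, ∀ U' ∈ C, U ≠ U' → U ⊓ U' = ⊥) :
    ∃ C' : Finset (Submodule K (W × Z)),
      (∀ U ∈ C', finrank K ↥U = k) ∧
      (∀ U ∈ C', ∀ U' ∈ C', U ≠ U' → U ⊓ U' = ⊥) ∧
      C'.card = C.card + Fintype.card K ^ m := by
  have hm : m ≠ 0 := by omega
  set L := FqmExt K m with hL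
  haveI : Finite L := Module.finite_of_finite K
  haveI : Fintype L := Fintype.ofFinite _
  have hLrank : finrank K L = m := FqmExt.finrank K m hm
  have hcardL : Fintype.card L = Fintype.card K ^ m := by
    rw [card_eq_pow_finrank (K := K) (V := L), hLrank]
  obtain ⟨j, hj⟩ := exists_inj (V := Z) (W := L) (by rw [hZ, hLrank]; exact hkm)
  obtain ⟨eL⟩ : Nonempty (L ≃ₗ[K] W) :=
    ⟨LinearEquiv.ofFinrankEq _ _ (by rw [hLrank, hW])⟩
  set A : L → (Z →ₗ[K] W) :=
    fun α => eL.toLinearMap ∘ₗ (LinearMap.mulLeft K α) ∘ₗ j with hA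
  have hAapp : ∀ α v, A α v = eL (α * j v) := fun α v => rfl
  have hAzero : ∀ α v, A α v = A (0 : L) v → (α = 0 ∨ v = 0) := by
    intro α v h
    rw [hAapp, hAapp, zero_mul] at h
    have h1 : α * j v = 0 := by
      apply eL.injective
      simpa using h
    rcases mul_eq_zero.mp h1 with h2 | h2
    · exact Or.inl h2
    · right
      apply hj
      simpa using h2
  set G : L → Submodule K (W × Z) :=
    fun α => LinearMap.range ((A α).prod LinearMap.id) with hG
  have hGmem : ∀ α x, x ∈ G α ↔ ∃ v : Z, (A α v, v) = x := by
    intro α x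
    simp [hG, LinearMap.mem_range, LinearMap.prod_apply, Pi.prod]
  have hGinjmap : ∀ α, Function.Injective ((A α).prod (LinearMap.id : Z →ₗ[K] Z)) := by
    intro α x y h
    have := congrArg Prod.snd h
    simpa using this
  have hGrank : ∀ α, finrank K ↥(G α) = k := by
    intro α
    rw [hG]
    simp only []
    rw [LinearMap.finrank_range_of_inj (hGinjmap α), hZ]
  have hGdisj : ∀ α β, α ≠ β → G α ⊓ G β = ⊥ := by
    intro α β hne
    rw [eq_bot_iff]
    intro x hx
    rw [Submodule.mem_inf] at hx
    obtain ⟨v, hv⟩ := (hGmem α x).mp hx.1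
    obtain ⟨u, hu⟩ := (hGmem β x).mp hx.2
    have hvu : v = u := by
      have := congrArg Prod.snd (hv.trans hu.symm)
      simpa using this
    subst hvu
    have heq : A α v = A β v := by
      have := congrArg Prod.fst (hv.trans hu.symm)
      simpa using this
    have hjv : v = 0 := by
      have h1 : (α - β) * j v = 0 := by
        have h2 : α * j v = β * j v := by
          apply eL.injective
          rw [← hAapp, ← hAapp]
          exact heq
        rw [sub_mul, sub_eq_zero]
        exact h2
      rcases mul_eq_zero.mp h1 with h2 | h2
      · exact absurd (sub_eq_zero.mp h2) hne
      · apply hj; simpa using h2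
    subst hjv
    have : x = 0 := by
      rw [← hv]
      simp
    simp [this, Submodule.zero_mem]
  have hGinl : ∀ α (U : Submodule K W), G α ⊓ U.map (LinearMap.inl K W Z) = ⊥ := by
    intro α U
    rw [eq_bot_iff]
    intro x hx
    rw [Submodule.mem_inf] at hx
    obtain ⟨v, hv⟩ := (hGmem α x).mp hx.1
    obtain ⟨u, hu, hux⟩ := Submodule.mem_map.mp hx.2
    have hx2 : x.2 = 0 := by rw [← hux]; rfl
    have hv0 : v = 0 := by
      have h2 : v = x.2 := congrArg Prod.snd hv
      exact h2.trans hx2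
    subst hv0
    have : x = 0 := by rw [← hv]; simp
    simp [this, Submodule.zero_mem]
  have hGne : ∀ α, G α ≠ ⊥ := by
    intro α hbot
    have := hGrank α
    rw [hbot, finrank_bot] at this
    omega
  -- the two families
  set C₁ := C.image (Submodule.map (LinearMap.inl K W Z)) with hC₁
  set C₂ := (Finset.univ : Finset L).image G with hC₂
  have hinl_inj : Function.Injective (Submodule.map (LinearMap.inl K W Z)) :=
    Submodule.map_injective_of_injective LinearMap.inl_injective
  have hGinj : Function.Injective G := by
    intro α β h
    by_contra hne
    have := hGdisj α β hne
    rw [h, inf_idem] at this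
    exact hGne β this
  have hdisjC : Disjoint C₁ C₂ := by
    rw [Finset.disjoint_left]
    intro U hU1 hU2
    rw [hC₁, Finset.mem_image] at hU1
    rw [hC₂, Finset.mem_image] at hU2
    obtain ⟨U₀, hU₀, rfl⟩ := hU1
    obtain ⟨α, _, hα⟩ := hU2
    have := hGinl α U₀
    rw [hα, inf_idem] at this
    exact hGne α (hα ▸ this)
  refine ⟨C₁ ∪ C₂, ?_, ?_, ?_⟩
  · intro U hU
    rcases Finset.mem_union.mp hU with h | h
    · obtain ⟨U₀, hU₀, rfl⟩ := Finset.mem_image.mp h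
      have : (↥(U₀.map (LinearMap.inl K W Z)) ≃ₗ[K] ↥U₀) :=
        (Submodule.equivMapOfInjective _ LinearMap.inl_injective U₀).symm
      rw [this.finrank_eq, hdim U₀ hU₀]
    · obtain ⟨α, _, rfl⟩ := Finset.mem_image.mp h
      exact hGrank α
  · intro U hU U' hU' hne
    rcases Finset.mem_union.mp hU with h | h <;> rcases Finset.mem_union.mp hU' with h' | h'
    · obtain ⟨U₀, hU₀, rfl⟩ := Finset.mem_image.mp h
      obtain ⟨U₁, hU₁, rfl⟩ := Finset.mem_image.mp h'
      have hne₀ : U₀ ≠ U₁ := fun hc => hne (by rw [hc])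
      rw [← Submodule.map_inf _ LinearMap.inl_injective, hdisj U₀ hU₀ U₁ hU₁ hne₀,
        Submodule.map_bot]
    · obtain ⟨U₀, hU₀, rfl⟩ := Finset.mem_image.mp h
      obtain ⟨α, _, rfl⟩ := Finset.mem_image.mp h'
      rw [inf_comm]
      exact hGinl α U₀
    · obtain ⟨α, _, rfl⟩ := Finset.mem_image.mp h
      obtain ⟨U₀, hU₀, rfl⟩ := Finset.mem_image.mp h'
      exact hGinl α U₀
    · obtain ⟨α, _, rfl⟩ := Finset.mem_image.mp h
      obtain ⟨β, _, rfl⟩ := Finset.mem_image.mp h'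
      exact hGdisj α β (fun hc => hne (by rw [hc]))
  · rw [Finset.card_union_of_disjoint hdisjC, hC₁, hC₂,
      Finset.card_image_of_injective _ hinl_inj,
      Finset.card_image_of_injective _ hGinj, Finset.card_univ, hcardL]


theorem transfer {V V' : Type*} [AddCommGroup V] [Module K V] [AddCommGroup V']
    [Module K V'] [FiniteDimensional K V] (e : V ≃ₗ[K] V') {k : ℕ}
    (C : Finset (Submodule K V)) (hdim : ∀ U ∈ C, finrank K ↥U = k)
    (hdisj : ∀ U ∈ C, ∀ U' ∈ C, U ≠ U' → U ⊓ U' = ⊥) :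
    ∃ C' : Finset (Submodule K V'),
      (∀ U ∈ C', finrank K ↥U = k) ∧
      (∀ U ∈ C', ∀ U' ∈ C', U ≠ U' → U ⊓ U' = ⊥) ∧ C'.card = C.card := by
  classical
  refine ⟨C.image (Submodule.map (e : V →ₗ[K] V')), ?_, ?_, ?_⟩
  · rintro U hU
    obtain ⟨U₀, hU₀, rfl⟩ := Finset.mem_image.mp hU
    rw [LinearEquiv.finrank_map_eq e U₀]
    exact hdim _ hU₀
  · rintro U hU U' hU' hne
    obtain ⟨U₀, hU₀, rfl⟩ := Finset.mem_image.mp hU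
    obtain ⟨U₁, hU₁, rfl⟩ := Finset.mem_image.mp hU'
    have hne₀ : U₀ ≠ U₁ := fun hc => hne (by rw [hc])
    rw [← Submodule.map_inf (e : V →ₗ[K] V') e.injective, hdisj U₀ hU₀ U₁ hU₁ hne₀,
      Submodule.map_bot]
  · exact Finset.card_image_of_injective _
      (Submodule.map_injective_of_injective e.injective)

theorem construct (k : ℕ) (hk : 1 ≤ k) (s : ℕ) (hs : 1 ≤ s) :
    ∀ (V : Type u) [AddCommGroup V] [Module K V] [FiniteDimensional K V],
      finrank K V = s * k + 1 →
      ∃ C : Finset (Submodule K V), (∀ U ∈ C, finrank K ↥U = k) ∧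
        (∀ U ∈ C, ∀ U' ∈ C, U ≠ U' → U ⊓ U' = ⊥) ∧
        C.card = Nps (Fintype.card K) k s := by
  induction s, hs using Nat.le_induction with
  | base =>
    intro V _ _ _ hV
    obtain ⟨U, hU⟩ := exists_submodule_finrank k (by rw [hV]; omega)
    refine ⟨{U}, ?_, ?_, ?_⟩
    · intro U' hU'
      rw [Finset.mem_singleton] at hU'
      rw [hU', hU]
    · intro U' hU' U'' hU'' hne
      rw [Finset.mem_singleton] at hU' hU''
      exact absurd (hU'.trans hU''.symm) hne
    · simp [Nps]
  | succ s hs ih =>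
    intro V _ _ _ hV
    obtain ⟨C, hdim, hdisj, hcard⟩ := ih (Fin (s*k+1) → K) (by simp)
    obtain ⟨C', h1, h2, h3⟩ := construction_step (W := Fin (s*k+1) → K)
      (Z := Fin k → K) hk (by have := Nat.le_mul_of_pos_left k (show 0 < s by omega); omega : k ≤ s*k+1) (by simp) (by simp) C hdim hdisj
    have he : finrank K ((Fin (s*k+1) → K) × (Fin k → K)) = finrank K V := by
      rw [Module.finrank_prod, hV]
      simp only [finrank_pi, Fintype.card_fin]
      ring
    obtain ⟨e⟩ : Nonempty (((Fin (s*k+1) → K) × (Fin k → K)) ≃ₗ[K] V) :=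
      ⟨LinearEquiv.ofFinrankEq _ _ he⟩
    obtain ⟨C'', g1, g2, g3⟩ := transfer e C' h1 h2
    refine ⟨C'', g1, g2, ?_⟩
    rw [g3, h3, hcard]
    have hs0 : s ≠ 0 := by omega
    simp only [Nps, if_neg hs0]

theorem twok_le_dS_iff {V : Type*} [AddCommGroup V] [Module K V] [FiniteDimensional K V]
    {k : ℕ} (U W : Submodule K V) (hU : finrank K ↥U = k) (hW : finrank K ↥W = k) :
    2 * k ≤ dS U W ↔ U ⊓ W = ⊥ := by
  have hsum := Submodule.finrank_sup_add_finrank_inf_eq U W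
  rw [hU, hW] at hsum
  unfold dS
  constructor
  · intro h
    apply Submodule.finrank_eq_zero.mp
    omega
  · intro h
    rw [h, finrank_bot] at hsum ⊢
    omega


end Construct

end Beut

/-- Beutelspacher's theorem: for `n ≡ 1 (mod k)`,
`A_q(n,2k;k) = (q^n − q^{k+1} + q^k − 1)/(q^k − 1)`. -/
theorem Acdc_beutelspacher {K : Type*} [Field K] [Fintype K] {n k : ℕ}
    (hk1 : 1 ≤ k) (hkn : k ≤ n) (hmod : n % k = 1) :
    Acdc K (Fin n → K) (2 * k) k =
      (Fintype.card K ^ n - Fintype.card K ^ (k + 1) + Fintype.card K ^ k - 1) /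
        (Fintype.card K ^ k - 1) := by
  open Beut in
  classical
  have hq : 2 ≤ Fintype.card K := Fintype.one_lt_card
  have hk2 : 2 ≤ k := by
    rcases Nat.eq_or_lt_of_le hk1 with h | h
    · exfalso; rw [← h] at hmod; simp [Nat.mod_one] at hmod
    · omega
  obtain ⟨s, hs1, hn⟩ : ∃ s, 1 ≤ s ∧ n = s * k + 1 :=
    ⟨n / k, (Nat.one_le_div_iff (by omega)).mpr hkn, by
      have h := Nat.div_add_mod' n k
      rw [hmod] at h
      omega⟩
  have hF : ((Nps (Fintype.card K) k s : ℕ):ℤ) * ((Fintype.card K:ℤ)^k - 1)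
      = (Fintype.card K:ℤ)^(s*k+1) - (Fintype.card K:ℤ)^(k+1) + (Fintype.card K:ℤ)^k - 1 :=
    Nps_formula (Fintype.card K) k s hs1
  have h2 : (1:ℕ) ≤ Fintype.card K^k := Nat.one_le_pow _ _ (by omega)
  have h1 : Fintype.card K^(k+1) ≤ Fintype.card K^n := Nat.pow_le_pow_right (by omega)
    (by have := Nat.le_mul_of_pos_left k (show 0 < s by omega); omega)
  have h3 : (1:ℕ) ≤ Fintype.card K^n - Fintype.card K^(k+1) + Fintype.card K^k :=
    le_trans h2 (Nat.le_add_left _ _)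
  have hdivF : (Fintype.card K^n - Fintype.card K^(k+1) + Fintype.card K^k - 1)
      / (Fintype.card K^k - 1) = Nps (Fintype.card K) k s := by
    have hNat : Fintype.card K^n - Fintype.card K^(k+1) + Fintype.card K^k - 1
        = Nps (Fintype.card K) k s * (Fintype.card K^k - 1) := by
      have hcast : ((Fintype.card K^n - Fintype.card K^(k+1) + Fintype.card K^k - 1 : ℕ) : ℤ)
          = ((Nps (Fintype.card K) k s * (Fintype.card K^k - 1) : ℕ) : ℤ) := by
        push_cast [Nat.cast_sub h1, Nat.cast_sub h2, Nat.cast_sub h3]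
        rw [hn]
        linear_combination -hF
      exact_mod_cast hcast
    rw [hNat, Nat.mul_div_cancel]
    have hk' : 2 ≤ Fintype.card K^k := by
      calc 2 ≤ Fintype.card K := hq
      _ = Fintype.card K^1 := (pow_one _).symm
      _ ≤ Fintype.card K^k := Nat.pow_le_pow_right (by omega) hk1
    omega
  rw [hdivF]
  have hVfin : finrank K (Fin n → K) = s * k + 1 := by
    simp only [finrank_pi, Fintype.card_fin]
    exact hn
  have hub : ∀ x ∈ { m | ∃ C : Finset (Submodule K (Fin n → K)),
      (∀ U ∈ C, finrank K ↥U = k) ∧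
      (∀ U ∈ C, ∀ W ∈ C, U ≠ W → 2 * k ≤ dS U W) ∧ C.card = m },
      x ≤ Nps (Fintype.card K) k s := by
    rintro x ⟨C, hdim, hd, rfl⟩
    apply upper_bound k s (Nps (Fintype.card K) k s) hk2 hs1 hVfin hF C hdim
    intro U hU W hW hne
    exact (twok_le_dS_iff U W (hdim U hU) (hdim W hW)).mp (hd U hU W hW hne)
  have hmem : Nps (Fintype.card K) k s ∈ { m | ∃ C : Finset (Submodule K (Fin n → K)),
      (∀ U ∈ C, finrank K ↥U = k) ∧
      (∀ U ∈ C, ∀ W ∈ C, U ≠ W → 2 * k ≤ dS U W) ∧ C.card = m } := by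
    obtain ⟨C, hdim, hdisj, hcard⟩ := construct k hk1 s hs1 (Fin n → K) hVfin
    refine ⟨C, hdim, ?_, hcard⟩
    intro U hU W hW hne
    exact (twok_le_dS_iff U W (hdim U hU) (hdim W hW)).mpr (hdisj U hU W hW hne)
  exact le_antisymm (csSup_le ⟨_, hmem⟩ hub) (le_csSup ⟨_, hub⟩ hmem)
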